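/- Let (H, R) be a quasitriangular Hopf algebra over a field k and define Q : H* → H by Q(p) = Σ p(R²r¹) R¹r², where R = Σ R¹⊗R² = Σ r¹⊗r². Then for all f, g ∈ H*, Q(f·g) = Σ Q(R¹⇀f) Q(g↼R²), where · is the product of H*_R. -/

import Mathlib

open TensorProduct LinearMap

noncomputable section

section RegularActions

variable {k H : Type*} [Field k] [Ring H] [Algebra k H]

/-- Left regular action of `H` on its dual: `(h ⇀ p)(x) = p (x * h)`. -/
def lact (h : H) (p : Module.Dual k H) : Module.Dual k H :=
  p ∘ₗ LinearMap.mulRight k h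

/-- Right regular action of `H` on its dual: `(p ↼ h)(x) = p (h * x)`. -/
def ract (h : H) (p : Module.Dual k H) : Module.Dual k H :=
  p ∘ₗ LinearMap.mulLeft k h

end RegularActions

section Legs

variable (k H : Type*) [Field k] [Ring H] [Algebra k H]

/-- `R ⊗ 1` viewed in `H ⊗ (H ⊗ H)` (the element `R₁₂`). -/
def leg12 (R : H ⊗[k] H) : H ⊗[k] (H ⊗[k] H) :=
  TensorProduct.assoc k H H H (R ⊗ₜ[k] (1 : H))

/-- The element `R₂₃ = 1 ⊗ R` of `H ⊗ (H ⊗ H)`. -/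
def leg23 (R : H ⊗[k] H) : H ⊗[k] (H ⊗[k] H) := (1 : H) ⊗ₜ[k] R

/-- The element `R₁₃` of `H ⊗ (H ⊗ H)`. -/
def leg13 (R : H ⊗[k] H) : H ⊗[k] (H ⊗[k] H) :=
  lTensor H (TensorProduct.comm k H H).toLinearMap (leg12 k H R)

end Legs

section QuasiTriangular

variable (k H : Type*) [Field k] [Ring H] [Bialgebra k H]

/-- `R` is an R-matrix making the bialgebra `H` quasitriangular:
`R` is invertible, `(Δ ⊗ id)(R) = R₁₃ R₂₃`, `(id ⊗ Δ)(R) = R₁₃ R₁₂`, and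
`Δᶜᵒᵖ(h) R = R Δ(h)` for all `h`. -/
def IsRMatrix (R : H ⊗[k] H) : Prop :=
  IsUnit R
  ∧ TensorProduct.assoc k H H H
      (rTensor H (Coalgebra.comul (R := k) (A := H)) R) = leg13 k H R * leg23 k H R
  ∧ lTensor H (Coalgebra.comul (R := k) (A := H)) R = leg13 k H R * leg12 k H R
  ∧ ∀ h : H, (TensorProduct.comm k H H) (Coalgebra.comul h) * R = R * Coalgebra.comul h

variable {k H}

/-- The convolution product on `H*`: `(f g)(h) = Σ f(h₁) g(h₂)`. -/
def conv (f g : Module.Dual k H) : Module.Dual k H :=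
  LinearMap.mul' k k ∘ₗ TensorProduct.map f g ∘ₗ (Coalgebra.comul (R := k) (A := H))

/-- The multiplication of `H*_R`: `(f · g)(h) = Σ g(h₁ R²) f(h₂ R¹)`,
i.e. `f · g = Σ (R² ⇀ g)(R¹ ⇀ f)`. -/
def mulR (R : H ⊗[k] H) (f g : Module.Dual k H) : Module.Dual k H :=
  LinearMap.mul' k k ∘ₗ TensorProduct.map g f
    ∘ₗ LinearMap.mulRight k ((TensorProduct.comm k H H) R)
    ∘ₗ (Coalgebra.comul (R := k) (A := H))

/-- The map `Q : H* → H`, `Q(p) = Σ p(R² r¹) R¹ r²`, i.e. `Q(p) = (p ⊗ id)(R₂₁ R)`. -/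
def Qmap (R : H ⊗[k] H) : Module.Dual k H →ₗ[k] H :=
  (TensorProduct.lid k H).toLinearMap
    ∘ₗ rTensor H (contractLeft k H)
    ∘ₗ (TensorProduct.assoc k (Module.Dual k H) H H).symm.toLinearMap
    ∘ₗ (TensorProduct.mk k (Module.Dual k H) (H ⊗[k] H)).flip
        ((TensorProduct.comm k H H) R * R)

end QuasiTriangular

set_option maxHeartbeats 1000000
set_option synthInstance.maxHeartbeats 400000

section Aux
variable (k H : Type*) [Field k] [Ring H] [Bialgebra k H]

def ι12 : H ⊗[k] H →ₐ[k] H ⊗[k] (H ⊗[k] H) :=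
  (Algebra.TensorProduct.assoc k k k H H H).toAlgHom.comp Algebra.TensorProduct.includeLeft

def ι23 : H ⊗[k] H →ₐ[k] H ⊗[k] (H ⊗[k] H) := Algebra.TensorProduct.includeRight

def σ23 : H ⊗[k] (H ⊗[k] H) →ₐ[k] H ⊗[k] (H ⊗[k] H) :=
  Algebra.TensorProduct.map (AlgHom.id k H) (Algebra.TensorProduct.comm k H H).toAlgHom

def ι13 : H ⊗[k] H →ₐ[k] H ⊗[k] (H ⊗[k] H) := (σ23 k H).comp (ι12 k H)

def ρmap : H ⊗[k] (H ⊗[k] H) →ₐ[k] H ⊗[k] (H ⊗[k] H) :=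
  (Algebra.TensorProduct.assoc k k k H H H).toAlgHom.comp
    (Algebra.TensorProduct.comm k H (H ⊗[k] H)).toAlgHom

def τ12 : H ⊗[k] (H ⊗[k] H) →ₐ[k] H ⊗[k] (H ⊗[k] H) :=
  (Algebra.TensorProduct.assoc k k k H H H).toAlgHom.comp
    ((Algebra.TensorProduct.map (Algebra.TensorProduct.comm k H H).toAlgHom
        (AlgHom.id k H)).comp
      (Algebra.TensorProduct.assoc k k k H H H).symm.toAlgHom)

def Fmap : H ⊗[k] H →ₐ[k] H ⊗[k] (H ⊗[k] H) :=
  (Algebra.TensorProduct.assoc k k k H H H).toAlgHom.comp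
    (Algebra.TensorProduct.map (Bialgebra.comulAlgHom k H) (AlgHom.id k H))

variable {k H}

lemma ι12_apply (x : H ⊗[k] H) : ι12 k H x = leg12 k H x := rfl

lemma ι23_apply (x : H ⊗[k] H) : ι23 k H x = leg23 k H x := rfl

lemma σ23_eq (y : H ⊗[k] (H ⊗[k] H)) :
    σ23 k H y = lTensor H (TensorProduct.comm k H H).toLinearMap y := by
  induction y using TensorProduct.induction_on with
  | zero => simp
  | tmul a w => rfl
  | add u v hu hv => simp [map_add, hu, hv]

lemma ι13_apply (x : H ⊗[k] H) : ι13 k H x = leg13 k H x := by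
  show σ23 k H (ι12 k H x) = _
  rw [σ23_eq, ι12_apply]; rfl

end Aux

section Aux2
variable {k H : Type*} [Field k] [Ring H] [Bialgebra k H]

lemma leg12_mul (x y : H ⊗[k] H) :
    leg12 k H (x * y) = leg12 k H x * leg12 k H y := by
  rw [← ι12_apply, ← ι12_apply, ← ι12_apply, map_mul]

lemma leg23_mul (x y : H ⊗[k] H) :
    leg23 k H (x * y) = leg23 k H x * leg23 k H y := by
  rw [← ι23_apply, ← ι23_apply, ← ι23_apply, map_mul]

lemma leg13_mul (x y : H ⊗[k] H) :
    leg13 k H (x * y) = leg13 k H x * leg13 k H y := by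
  rw [← ι13_apply, ← ι13_apply, ← ι13_apply, map_mul]

lemma leg12_tmul (a b : H) :
    leg12 k H (a ⊗ₜ[k] b) = a ⊗ₜ[k] (b ⊗ₜ[k] (1 : H)) := by
  simp [leg12]

lemma leg13_tmul (a b : H) :
    leg13 k H (a ⊗ₜ[k] b) = a ⊗ₜ[k] ((1 : H) ⊗ₜ[k] b) := by
  simp [leg13, leg12]

lemma ρmap_tmul (a : H) (w : H ⊗[k] H) :
    ρmap k H (a ⊗ₜ[k] w) = TensorProduct.assoc k H H H (w ⊗ₜ[k] a) := rfl

lemma comm_comm (x : H ⊗[k] H) :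
    (TensorProduct.comm k H H) ((TensorProduct.comm k H H) x) = x := by
  induction x using TensorProduct.induction_on with
  | zero => simp
  | tmul a b => simp
  | add u v hu hv => simp [map_add, hu, hv]

lemma ρ_leg12 (x : H ⊗[k] H) :
    ρmap k H (leg12 k H x) = leg13 k H ((TensorProduct.comm k H H) x) := by
  induction x using TensorProduct.induction_on with
  | zero => simp [leg12, leg13]
  | tmul a b => rw [leg12_tmul, ρmap_tmul]; simp [leg13_tmul]
  | add u v hu hv => simp only [leg12, leg13, leg12] at *
                     simp only [add_tmul, map_add] at *
                     rw [hu, hv]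

lemma ρ_leg13 (x : H ⊗[k] H) :
    ρmap k H (leg13 k H x) = leg23 k H ((TensorProduct.comm k H H) x) := by
  induction x using TensorProduct.induction_on with
  | zero => simp [leg13, leg12, leg23]
  | tmul a b => rw [leg13_tmul, ρmap_tmul]; simp [leg23]
  | add u v hu hv => simp only [leg13, leg12, leg23] at *
                     simp only [add_tmul, map_add] at *
                     rw [hu, hv]
                     simp [tmul_add]

lemma ρ_leg23 (x : H ⊗[k] H) :
    ρmap k H (leg23 k H x) = leg12 k H x := by
  induction x using TensorProduct.induction_on with
  | zero => simp [leg23, leg12]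
  | tmul a b => rw [show leg23 k H (a ⊗ₜ[k] b) = (1:H) ⊗ₜ[k] (a ⊗ₜ[k] b) from rfl,
                    ρmap_tmul]
                simp [leg12_tmul]
  | add u v hu hv => simp only [leg23, leg12] at *
                     simp only [add_tmul, tmul_add, map_add] at *
                     rw [hu, hv]

lemma τ12_leg12 (x : H ⊗[k] H) :
    τ12 k H (leg12 k H x) = leg12 k H ((TensorProduct.comm k H H) x) := by
  induction x using TensorProduct.induction_on with
  | zero => simp [leg12]
  | tmul a b =>
      rw [leg12_tmul]
      show (Algebra.TensorProduct.assoc k k k H H H)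
        ((Algebra.TensorProduct.map (Algebra.TensorProduct.comm k H H).toAlgHom
          (AlgHom.id k H)) ((Algebra.TensorProduct.assoc k k k H H H).symm
            (a ⊗ₜ[k] (b ⊗ₜ[k] (1:H))))) = _
      simp [Algebra.TensorProduct.assoc_symm_tmul, Algebra.TensorProduct.map_tmul,
        Algebra.TensorProduct.comm_tmul, Algebra.TensorProduct.assoc_tmul, leg12_tmul]
  | add u v hu hv => simp only [leg12] at *
                     simp only [add_tmul, map_add] at *
                     rw [hu, hv]

lemma τ12_leg13 (x : H ⊗[k] H) :
    τ12 k H (leg13 k H x) = leg23 k H x := by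
  induction x using TensorProduct.induction_on with
  | zero => simp [leg13, leg12, leg23]
  | tmul a b =>
      rw [leg13_tmul]
      show (Algebra.TensorProduct.assoc k k k H H H)
        ((Algebra.TensorProduct.map (Algebra.TensorProduct.comm k H H).toAlgHom
          (AlgHom.id k H)) ((Algebra.TensorProduct.assoc k k k H H H).symm
            (a ⊗ₜ[k] ((1:H) ⊗ₜ[k] b)))) = _
      simp [Algebra.TensorProduct.assoc_symm_tmul, Algebra.TensorProduct.map_tmul,
        Algebra.TensorProduct.comm_tmul, Algebra.TensorProduct.assoc_tmul, leg23]
  | add u v hu hv => simp only [leg13, leg12, leg23] at *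
                     simp only [add_tmul, tmul_add, map_add] at *
                     rw [hu, hv]

lemma τ12_leg23 (x : H ⊗[k] H) :
    τ12 k H (leg23 k H x) = leg13 k H x := by
  induction x using TensorProduct.induction_on with
  | zero => simp [leg13, leg12, leg23]
  | tmul a b =>
      show (Algebra.TensorProduct.assoc k k k H H H)
        ((Algebra.TensorProduct.map (Algebra.TensorProduct.comm k H H).toAlgHom
          (AlgHom.id k H)) ((Algebra.TensorProduct.assoc k k k H H H).symm
            ((1:H) ⊗ₜ[k] (a ⊗ₜ[k] b)))) = _
      simp [Algebra.TensorProduct.assoc_symm_tmul, Algebra.TensorProduct.map_tmul,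
        Algebra.TensorProduct.comm_tmul, Algebra.TensorProduct.assoc_tmul, leg13_tmul]
  | add u v hu hv => simp only [leg13, leg12, leg23] at *
                     simp only [add_tmul, tmul_add, map_add] at *
                     rw [hu, hv]

end Aux2

section Aux3
variable {k H : Type*} [Field k] [Ring H] [Bialgebra k H]

lemma Fmap_apply (x : H ⊗[k] H) :
    Fmap k H x = TensorProduct.assoc k H H H
      (rTensor H (Coalgebra.comul (R := k) (A := H)) x) := by
  induction x using TensorProduct.induction_on with
  | zero => simp
  | tmul a b => rfl
  | add u v hu hv => simp [map_add, hu, hv]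

lemma assoc_tmul_eq (w : H ⊗[k] H) (c : H) :
    TensorProduct.assoc k H H H (w ⊗ₜ[k] c)
      = leg12 k H w * ((1:H) ⊗ₜ[k] ((1:H) ⊗ₜ[k] c)) := by
  induction w using TensorProduct.induction_on with
  | zero => simp [leg12]
  | tmul a b => rw [leg12_tmul]
                simp [Algebra.TensorProduct.tmul_mul_tmul]
  | add u v hu hv => simp only [leg12] at *
                     simp only [add_tmul, map_add, add_mul] at *
                     rw [hu, hv]

lemma leg12_comm_c (w : H ⊗[k] H) (c : H) :
    leg12 k H w * ((1:H) ⊗ₜ[k] ((1:H) ⊗ₜ[k] c))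
      = ((1:H) ⊗ₜ[k] ((1:H) ⊗ₜ[k] c)) * leg12 k H w := by
  induction w using TensorProduct.induction_on with
  | zero => simp [leg12]
  | tmul a b => rw [leg12_tmul]
                simp [Algebra.TensorProduct.tmul_mul_tmul]
  | add u v hu hv => simp only [leg12] at *
                     simp only [add_tmul, map_add, add_mul, mul_add] at *
                     rw [hu, hv]

lemma Fmap_tmul (a b : H) :
    Fmap k H (a ⊗ₜ[k] b) = leg12 k H (Coalgebra.comul (R := k) a)
      * ((1:H) ⊗ₜ[k] ((1:H) ⊗ₜ[k] b)) := by
  rw [Fmap_apply, ← assoc_tmul_eq]; rfl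

lemma τ12_one_one (c : H) :
    τ12 k H ((1:H) ⊗ₜ[k] ((1:H) ⊗ₜ[k] c)) = (1:H) ⊗ₜ[k] ((1:H) ⊗ₜ[k] c) := by
  have : ((1:H) ⊗ₜ[k] ((1:H) ⊗ₜ[k] c)) = leg23 k H ((1:H) ⊗ₜ[k] c) := rfl
  rw [this, τ12_leg23, leg13_tmul]; exact this

end Aux3

section Aux4
variable {k H : Type*} [Field k] [Ring H] [Bialgebra k H]
variable {R : H ⊗[k] H} (hR : IsRMatrix k H R)

local notation "τ" x => (TensorProduct.comm k H H) x

include hR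

lemma F_R : Fmap k H R = leg13 k H R * leg23 k H R := by
  rw [Fmap_apply, hR.2.1]

lemma F_commR : Fmap k H ((TensorProduct.comm k H H) R)
    = leg23 k H (τ R) * leg13 k H (τ R) := by
  have h1 : ∀ x : H ⊗[k] H, Fmap k H ((TensorProduct.comm k H H) x)
      = ρmap k H (lTensor H (Coalgebra.comul (R := k) (A := H)) x) := by
    intro x
    induction x using TensorProduct.induction_on with
    | zero => simp
    | tmul a b =>
        rw [TensorProduct.comm_tmul, lTensor_tmul, ρmap_tmul, Fmap_apply]
        rfl
    | add u v hu hv => simp [map_add, hu, hv]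
  rw [h1, hR.2.2.1, map_mul, ρ_leg13, ρ_leg12]

lemma qybe : leg12 k H R * (leg13 k H R * leg23 k H R)
    = leg23 k H R * (leg13 k H R * leg12 k H R) := by
  have key : ∀ x : H ⊗[k] H,
      leg12 k H R * Fmap k H x = τ12 k H (Fmap k H x) * leg12 k H R := by
    intro x
    induction x using TensorProduct.induction_on with
    | zero => simp
    | tmul a b =>
        rw [Fmap_tmul, map_mul, τ12_leg12, τ12_one_one]
        calc leg12 k H R * (leg12 k H (Coalgebra.comul (R := k) a)
                * ((1:H) ⊗ₜ[k] ((1:H) ⊗ₜ[k] b)))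
            = leg12 k H (R * Coalgebra.comul (R := k) a)
                * ((1:H) ⊗ₜ[k] ((1:H) ⊗ₜ[k] b)) := by
              rw [leg12_mul, mul_assoc]
          _ = leg12 k H ((τ (Coalgebra.comul (R := k) a)) * R)
                * ((1:H) ⊗ₜ[k] ((1:H) ⊗ₜ[k] b)) := by rw [hR.2.2.2 a]
          _ = leg12 k H (τ (Coalgebra.comul (R := k) a))
                * (leg12 k H R * ((1:H) ⊗ₜ[k] ((1:H) ⊗ₜ[k] b))) := by
              rw [leg12_mul, mul_assoc]
          _ = leg12 k H (τ (Coalgebra.comul (R := k) a))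
                * (((1:H) ⊗ₜ[k] ((1:H) ⊗ₜ[k] b)) * leg12 k H R) := by
              rw [leg12_comm_c]
          _ = leg12 k H (τ (Coalgebra.comul (R := k) a))
                * ((1:H) ⊗ₜ[k] ((1:H) ⊗ₜ[k] b)) * leg12 k H R := by
              rw [mul_assoc]
    | add u v hu hv => simp only [map_add, add_mul, mul_add] at *
                       rw [hu, hv]
  have h := key R
  rw [F_R hR, map_mul, τ12_leg13, τ12_leg23, ← mul_assoc] at h
  rw [← mul_assoc, ← mul_assoc, h, mul_assoc]

lemma qybe_rho2 : leg23 k H R * (leg12 k H (τ R) * leg13 k H (τ R))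
    = leg13 k H (τ R) * (leg12 k H (τ R) * leg23 k H R) := by
  have h1 := congrArg (ρmap k H) (qybe hR)
  simp only [map_mul, ρ_leg12, ρ_leg13, ρ_leg23] at h1
  have h2 := congrArg (ρmap k H) h1
  simp only [map_mul, ρ_leg12, ρ_leg13, ρ_leg23, comm_comm] at h2
  exact h2

lemma qybe_tau12 : leg12 k H (τ R) * (leg23 k H R * leg13 k H R)
    = leg13 k H R * (leg23 k H R * leg12 k H (τ R)) := by
  have h1 := congrArg (τ12 k H) (qybe hR)
  simp only [map_mul, τ12_leg12, τ12_leg13, τ12_leg23] at h1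
  exact h1

end Aux4


section Aux5
variable {k H : Type*} [Field k] [Ring H] [Bialgebra k H]

def Lmap (f g : Module.Dual k H) : H ⊗[k] (H ⊗[k] H) →ₗ[k] H :=
  (TensorProduct.lid k H).toLinearMap ∘ₗ rTensor H g
    ∘ₗ lTensor H ((TensorProduct.lid k H).toLinearMap ∘ₗ rTensor H f)

lemma Lmap_tmul (f g : Module.Dual k H) (x y z : H) :
    Lmap f g (x ⊗ₜ[k] (y ⊗ₜ[k] z)) = g x • (f y • z) := by
  simp [Lmap]; rw [smul_comm]

lemma Qmap_eq (R : H ⊗[k] H) (p : Module.Dual k H) :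
    Qmap R p = TensorProduct.lid k H
      (rTensor H p ((TensorProduct.comm k H H) R * R)) := by
  have claim : ∀ z : H ⊗[k] H,
      TensorProduct.lid k H (rTensor H (contractLeft k H)
        ((TensorProduct.assoc k (Module.Dual k H) H H).symm (p ⊗ₜ[k] z)))
      = TensorProduct.lid k H (rTensor H p z) := by
    intro z
    induction z using TensorProduct.induction_on with
    | zero => simp
    | tmul x y => simp
    | add u v hu hv => simp only [tmul_add, map_add] at *; rw [hu, hv]
  simpa [Qmap] using claim ((TensorProduct.comm k H H) R * R)

lemma Lmap_assoc (f g : Module.Dual k H) (w : H ⊗[k] H) (c : H) :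
    Lmap f g (TensorProduct.assoc k H H H (w ⊗ₜ[k] c))
      = (LinearMap.mul' k k) ((TensorProduct.map g f) w) • c := by
  induction w using TensorProduct.induction_on with
  | zero => simp
  | tmul a b => simp [Lmap_tmul, smul_smul]
  | add u v hu hv => simp only [add_tmul, map_add, add_smul] at *; rw [hu, hv]

lemma E1 (R : H ⊗[k] H) (f g : Module.Dual k H) :
    Qmap R (mulR R f g)
      = Lmap f g (Fmap k H ((TensorProduct.comm k H H) R * R)
          * leg12 k H ((TensorProduct.comm k H H) R)) := by
  rw [Qmap_eq]
  have claim : ∀ z : H ⊗[k] H,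
      TensorProduct.lid k H (rTensor H (mulR R f g) z)
        = Lmap f g (Fmap k H z * leg12 k H ((TensorProduct.comm k H H) R)) := by
    intro z
    induction z using TensorProduct.induction_on with
    | zero => simp
    | tmul u v =>
        rw [Fmap_tmul]
        rw [mul_assoc, ← leg12_comm_c, ← mul_assoc, ← leg12_mul, ← assoc_tmul_eq,
          Lmap_assoc]
        simp [mulR, mulRight_apply]
    | add u v hu hv => simp only [map_add, add_mul, tmul_add] at *; rw [hu, hv]
  exact claim _

lemma E2 (R : H ⊗[k] H) (f g : Module.Dual k H) (h h' : H) :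
    Qmap R (lact h f) * Qmap R (ract h' g)
      = Lmap f g (leg23 k H ((TensorProduct.comm k H H) R * R)
          * (h' ⊗ₜ[k] (h ⊗ₜ[k] (1:H)))
          * leg13 k H ((TensorProduct.comm k H H) R * R)) := by
  rw [Qmap_eq, Qmap_eq]
  have claim : ∀ z₁ z₂ : H ⊗[k] H,
      TensorProduct.lid k H (rTensor H (lact h f) z₁)
        * TensorProduct.lid k H (rTensor H (ract h' g) z₂)
      = Lmap f g (leg23 k H z₁ * (h' ⊗ₜ[k] (h ⊗ₜ[k] (1:H))) * leg13 k H z₂) := by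
    intro z₁ z₂
    induction z₁ using TensorProduct.induction_on with
    | zero => simp [leg23]
    | tmul a b =>
        induction z₂ using TensorProduct.induction_on with
        | zero => simp [leg13, leg12]
        | tmul c d =>
            rw [leg13_tmul]
            show (TensorProduct.lid k H) ((lact h f) a ⊗ₜ[k] b)
              * (TensorProduct.lid k H) ((ract h' g) c ⊗ₜ[k] d) = _
            simp only [leg23]
            rw [show ((1:H) ⊗ₜ[k] (a ⊗ₜ[k] b)) * (h' ⊗ₜ[k] (h ⊗ₜ[k] (1:H)))
                  * (c ⊗ₜ[k] ((1:H) ⊗ₜ[k] d))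
                = (h' * c) ⊗ₜ[k] (((a * h) ⊗ₜ[k] (b * d)) : H ⊗[k] H) from by
              simp [Algebra.TensorProduct.tmul_mul_tmul]]
            rw [Lmap_tmul]
            simp only [lact, ract, TensorProduct.lid_tmul, coe_comp,
              Function.comp_apply, mulRight_apply, mulLeft_apply]
            rw [smul_mul_assoc, mul_smul_comm, smul_smul, smul_smul,
              mul_comm (f (a * h)) (g (h' * c))]
        | add u v hu hv =>
            simp only [leg13, leg12, add_tmul, tmul_add, map_add, add_mul,
              mul_add] at *
            rw [hu, hv]
    | add u v hu hv =>
        simp only [leg23, add_tmul, tmul_add, map_add, add_mul, mul_add] at *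
        rw [hu, hv]
  exact claim _ _

lemma chain {M : Type*} [Monoid M] {a b c d e : M}
    (h1 : e * (d * c) = c * (d * e)) (h2 : d * (e * b) = b * (e * d)) :
    ((a * b) * (c * d)) * e = ((a * d) * e) * (b * c) := by
  have hbc : b * (e * (d * c)) = d * (e * (b * c)) := by
    calc b * (e * (d * c)) = (b * (e * d)) * c := by
          rw [mul_assoc, mul_assoc]
      _ = (d * (e * b)) * c := by rw [h2]
      _ = d * (e * (b * c)) := by rw [mul_assoc, mul_assoc]
  calc ((a * b) * (c * d)) * e = a * (b * (c * (d * e))) := by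
        simp only [mul_assoc]
    _ = a * (b * (e * (d * c))) := by rw [← h1]
    _ = a * (d * (e * (b * c))) := by rw [hbc]
    _ = ((a * d) * e) * (b * c) := by simp only [mul_assoc]

end Aux5

/-- Let `(H, R)` be a quasitriangular Hopf algebra over a field `k` and
define `Q : H* → H` by `Q(p) = Σ p(R² r¹) R¹ r²` (where `R = Σ R¹⊗R² = Σ r¹⊗r²`).
Then for all `f, g ∈ H*`, `Q(f·g) = Σ Q(R¹ ⇀ f) Q(g ↼ R²)`, where `·` is the product of
`H*_R` and the Sweedler sum runs over any finite representation of `R`. -/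
theorem Qmap_mulR
    {k H : Type*} [Field k] [Ring H] [HopfAlgebra k H]
    (R : H ⊗[k] H) (hR : IsRMatrix k H R) :
    ∀ (f g : Module.Dual k H) (n : ℕ) (R₁ R₂ : Fin n → H),
      R = ∑ i, R₁ i ⊗ₜ[k] R₂ i →
      Qmap R (mulR R f g) = ∑ i, Qmap R (lact (R₁ i) f) * Qmap R (ract (R₂ i) g) := by
  intro f g n R₁ R₂ hrep
  have hsum : ∑ i : Fin n, (R₂ i ⊗ₜ[k] (R₁ i ⊗ₜ[k] (1:H)))
      = leg12 k H ((TensorProduct.comm k H H) R) := by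
    conv_rhs => rw [hrep]
    rw [map_sum]
    simp only [TensorProduct.comm_tmul, leg12]
    rw [sum_tmul, map_sum]
    simp [assoc_tmul]
  rw [E1 R f g]
  rw [Finset.sum_congr rfl fun i _ => E2 R f g (R₁ i) (R₂ i)]
  rw [← map_sum, ← Finset.sum_mul, ← Finset.mul_sum, hsum]
  congr 1
  rw [map_mul, F_commR hR, F_R hR, leg23_mul, leg13_mul]
  exact chain (qybe_tau12 hR) (qybe_rho2 hR)
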